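/- Let φ_1, …, φ_t be vectors in ℝ^d and let Λ_t = I + Σ_{i=1}^t φ_i φ_iᵀ, which is a positive definite (hence invertible) d × d matrix. Then Σ_{i=1}^t φ_iᵀ (Λ_t)⁻¹ φ_i ≤ d. -/

import Mathlib

open Matrix

lemma psd_vecMulVec {d : ℕ} (v : Fin d → ℝ) : (vecMulVec v v).PosSemidef := by
  refine posSemidef_iff_dotProduct_mulVec.mpr ⟨?_, ?_⟩
  · ext i j; simp [IsHermitian, conjTranspose, vecMulVec_apply, mul_comm]
  · intro x
    have h : star x ⬝ᵥ (vecMulVec v v *ᵥ x) = (v ⬝ᵥ x) * (v ⬝ᵥ x) := by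
      simp only [star_trivial, dotProduct, mulVec, vecMulVec_apply,
        Finset.mul_sum, Finset.sum_mul]
      refine Finset.sum_congr rfl fun i _ => Finset.sum_congr rfl fun j _ => ?_
      ring
    rw [h]; exact mul_self_nonneg _

lemma dot_eq_trace {d : ℕ} (v : Fin d → ℝ) (M : Matrix (Fin d) (Fin d) ℝ) :
    v ⬝ᵥ (M *ᵥ v) = ((M * vecMulVec v v).trace) := by
  simp only [Matrix.trace, Matrix.diag, mul_apply, dotProduct, mulVec,
    vecMulVec_apply, Finset.mul_sum]
  refine Finset.sum_congr rfl fun i _ => Finset.sum_congr rfl fun j _ => ?_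
  ring

lemma trace_nonneg_of_psd {d : ℕ} {M : Matrix (Fin d) (Fin d) ℝ}
    (h : M.PosSemidef) : 0 ≤ M.trace := by
  refine Finset.sum_nonneg fun i _ => ?_
  have := h.dotProduct_mulVec_nonneg (Pi.single i 1)
  simpa [dotProduct, mulVec, Pi.single_apply] using this

open Matrix in
theorem sum_quadform_inv_le_dim (d t : ℕ) (φ : Fin t → (Fin d → ℝ))
    (Λ : Matrix (Fin d) (Fin d) ℝ)
    (hΛ : Λ = 1 + ∑ i : Fin t, vecMulVec (φ i) (φ i)) :
    ∑ i : Fin t, φ i ⬝ᵥ (Λ⁻¹ *ᵥ φ i) ≤ (d : ℝ) := by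
  have hpsd : (∑ i : Fin t, vecMulVec (φ i) (φ i)).PosSemidef :=
    Finset.sum_induction _ _ (fun _ _ => Matrix.PosSemidef.add)
      (Matrix.PosSemidef.zero) (fun i _ => psd_vecMulVec (φ i))
  have hpd : Λ.PosDef := hΛ ▸ Matrix.PosDef.one.add_posSemidef hpsd
  have hunit : IsUnit Λ := hpd.isUnit
  have hmul : Λ⁻¹ * Λ = 1 :=
    Matrix.nonsing_inv_mul _ ((Matrix.isUnit_iff_isUnit_det _).1 hunit)
  have key : ∑ i : Fin t, φ i ⬝ᵥ (Λ⁻¹ *ᵥ φ i)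
      = (d : ℝ) - Λ⁻¹.trace := by
    calc ∑ i : Fin t, φ i ⬝ᵥ (Λ⁻¹ *ᵥ φ i)
        = ∑ i : Fin t, (Λ⁻¹ * vecMulVec (φ i) (φ i)).trace := by
          exact Finset.sum_congr rfl fun i _ => dot_eq_trace _ _
      _ = (Λ⁻¹ * ∑ i : Fin t, vecMulVec (φ i) (φ i)).trace := by
          rw [Finset.mul_sum, Matrix.trace_sum]
      _ = (Λ⁻¹ * (Λ - 1)).trace := by rw [hΛ, add_sub_cancel_left]
      _ = (d : ℝ) - Λ⁻¹.trace := by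
          rw [mul_sub, mul_one, Matrix.trace_sub, hmul, Matrix.trace_one]
          simp
  rw [key]
  have : (0:ℝ) ≤ Λ⁻¹.trace := trace_nonneg_of_psd hpd.inv.posSemidef
  linarith
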